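/- arXiv:2104.13838 — 3 statements merged into one kernel-verified Lean document; each statement's English description precedes it below -/
import Mathlib

section
/- Let V be a finite-dimensional real vector space of dimension m ≥ 1, and let Γ be an irreducible subgroup of GL(V), i.e. a subgroup for which the only Γ-invariant linear subspaces of V are {0} and V. Let v ∈ V and α ∈ V* (the dual space) be nonzero vectors with the property that α(g v) ∈ ℤ for every g ∈ Γ. Then the ℤ-submodule L of V generated by the orbit Γ·v = {g v : g ∈ Γ} is a free ℤ-module of rank m; equivalently, L is a discrete additive subgroup of V whose real span is all of V (a full ℤ-lattice in V). -/
/-- If `Γ ≤ GL(V)` is irreducible on the finite-dimensional real vector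
space `V` of dimension `m ≥ 1`, `v ∈ V` and `α ∈ V*` are nonzero with `α (g v) ∈ ℤ`
for every `g ∈ Γ`, then the ℤ-submodule `L` generated by the orbit `Γ · v` is a
free ℤ-module of rank `m`; equivalently, `L` is a discrete additive subgroup of `V`
whose real span is all of `V`. -/
theorem stmt_0 {V : Type*} [NormedAddCommGroup V] [NormedSpace ℝ V]
    [FiniteDimensional ℝ V] (m : ℕ) (hm : 1 ≤ m)
    (hdim : Module.finrank ℝ V = m)
    (Γ : Subgroup (V ≃ₗ[ℝ] V))
    (hirr : ∀ W : Submodule ℝ V, (∀ g ∈ Γ, ∀ x ∈ W, g x ∈ W) → W = ⊥ ∨ W = ⊤)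
    (v : V) (hv : v ≠ 0)
    (α : V →ₗ[ℝ] ℝ) (hα : α ≠ 0)
    (hint : ∀ g ∈ Γ, ∃ k : ℤ, α (g v) = (k : ℝ))
    (L : Submodule ℤ V)
    (hL : L = Submodule.span ℤ ((fun g : V ≃ₗ[ℝ] V => g v) '' (Γ : Set (V ≃ₗ[ℝ] V)))) :
    Nonempty (Module.Basis (Fin m) ℤ L) ∧ DiscreteTopology L ∧
      Submodule.span ℝ (L : Set V) = ⊤ := by
  classical
  set orb : Set V := (fun g : V ≃ₗ[ℝ] V => g v) '' (Γ : Set (V ≃ₗ[ℝ] V)) with horb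
  -- v is in the orbit
  have hv_orb : v ∈ orb := ⟨1, Γ.one_mem, by simp⟩
  -- every element of L has integer value under α ∘ g for g ∈ Γ
  have hintL : ∀ g ∈ Γ, ∀ x ∈ L, ∃ k : ℤ, α (g x) = (k : ℝ) := by
    intro g hg x hx
    have hsub : L ≤ Submodule.comap ((α.comp (g : V →ₗ[ℝ] V)).restrictScalars ℤ)
        (Submodule.span ℤ ({(1 : ℝ)} : Set ℝ)) := by
      rw [hL, Submodule.span_le]
      rintro _ ⟨h, hh, rfl⟩
      refine SetLike.mem_coe.mpr (Submodule.mem_comap.mpr ?_)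
      obtain ⟨k, hk⟩ := hint (g * h) (Γ.mul_mem hg hh)
      have heq : ((α.comp (g : V →ₗ[ℝ] V)).restrictScalars ℤ) (h v) = α ((g * h) v) := rfl
      rw [heq, hk]
      exact Submodule.mem_span_singleton.mpr ⟨k, by simp⟩
    have := hsub hx
    simp only [Submodule.mem_comap, LinearMap.coe_restrictScalars, LinearMap.comp_apply,
      LinearEquiv.coe_coe] at this
    obtain ⟨k, hk⟩ := Submodule.mem_span_singleton.mp this
    exact ⟨k, by rw [← hk]; simp⟩
  -- Step 1: real span of L is ⊤
  have hspanL : Submodule.span ℝ (L : Set V) = ⊤ := by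
    have hLset : Submodule.span ℝ (L : Set V) = Submodule.span ℝ orb := by
      rw [hL]; exact Submodule.span_span_of_tower ℤ ℝ orb
    rw [hLset]
    have hinv : ∀ g ∈ Γ, ∀ x ∈ Submodule.span ℝ orb, g x ∈ Submodule.span ℝ orb := by
      intro g hg x hx
      have : (g : V →ₗ[ℝ] V) x ∈ Submodule.map (g : V →ₗ[ℝ] V) (Submodule.span ℝ orb) :=
        Submodule.mem_map_of_mem hx
      rw [Submodule.map_span] at this
      refine Submodule.span_mono ?_ this
      rintro _ ⟨_, ⟨h, hh, rfl⟩, rfl⟩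
      exact ⟨g * h, Γ.mul_mem hg hh, rfl⟩
    rcases hirr (Submodule.span ℝ orb) hinv with h | h
    · exact absurd (h ▸ Submodule.subset_span hv_orb) (by simpa using hv)
    · exact h
  -- Step 2: the functionals α ∘ g span the dual space
  set S : Set (Module.Dual ℝ V) :=
    (fun g : V ≃ₗ[ℝ] V => α.comp (g : V →ₗ[ℝ] V)) '' (Γ : Set (V ≃ₗ[ℝ] V)) with hS
  have hco : (Submodule.span ℝ S).dualCoannihilator = ⊥ := by
    have hinv : ∀ g ∈ Γ, ∀ x ∈ (Submodule.span ℝ S).dualCoannihilator,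
        g x ∈ (Submodule.span ℝ S).dualCoannihilator := by
      intro g hg x hx
      rw [Submodule.mem_dualCoannihilator] at hx ⊢
      intro φ hφ
      have key : ∀ f ∈ S, f ((g : V →ₗ[ℝ] V) x) = 0 := by
        rintro _ ⟨h, hh, rfl⟩
        have h1 : (α.comp ((h * g : V ≃ₗ[ℝ] V) : V →ₗ[ℝ] V)) x = 0 :=
          hx _ (Submodule.subset_span ⟨h * g, Γ.mul_mem hh hg, rfl⟩)
        simpa using h1
      induction hφ using Submodule.span_induction with
      | mem f hf => exact key f hf
      | zero => simp
      | add f₁ f₂ _ _ h1 h2 => simp [h1, h2]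
      | smul c f _ h1 => simp [h1]
    rcases hirr (Submodule.span ℝ S).dualCoannihilator hinv with h | h
    · exact h
    · exfalso
      apply hα
      ext x
      have hx : x ∈ (Submodule.span ℝ S).dualCoannihilator := h ▸ Submodule.mem_top
      have := (Submodule.mem_dualCoannihilator x).mp hx (α.comp ((1 : V ≃ₗ[ℝ] V) : V →ₗ[ℝ] V))
        (Submodule.subset_span ⟨1, Γ.one_mem, rfl⟩)
      simpa using this
  have hStop : Submodule.span ℝ S = ⊤ := by
    have := Subspace.dualCoannihilator_dualAnnihilator_eq (W := Submodule.span ℝ S)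
    rw [hco] at this
    rw [← this, Submodule.dualAnnihilator_bot]
  -- extract a finite subset b ⊆ S spanning the dual
  have hind : LinearIndependent ℝ ((↑) : (∅ : Set (Module.Dual ℝ V)) → Module.Dual ℝ V) :=
    linearIndependent_empty_type
  have hind' : LinearIndepOn ℝ id (∅ : Set (Module.Dual ℝ V)) := linearIndepOn_empty ℝ id
  set b : Set (Module.Dual ℝ V) := hind'.extend (Set.empty_subset S) with hb
  have hbS : b ⊆ S := hind'.extend_subset _
  have hb_li : LinearIndependent ℝ ((↑) : b → Module.Dual ℝ V) :=
    hind'.linearIndepOn_extend _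
  have hb_span : Submodule.span ℝ b = ⊤ := by
    rw [← top_le_iff, ← hStop, Submodule.span_le]
    exact hind'.subset_span_extend _
  have hb_fin : b.Finite := hb_li.setFinite
  -- each f ∈ b takes integer values on L
  have hb_int : ∀ f ∈ b, ∀ x ∈ L, ∃ k : ℤ, f x = (k : ℝ) := by
    intro f hf x hx
    obtain ⟨g, hg, rfl⟩ := hbS hf
    obtain ⟨k, hk⟩ := hintL g hg x hx
    exact ⟨k, by simpa using hk⟩
  -- separation: if all f ∈ b vanish on z, then z = 0
  have hsep : ∀ z : V, (∀ f ∈ b, f z = 0) → z = 0 := by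
    intro z hz
    rw [← Module.forall_dual_apply_eq_zero_iff ℝ z]
    intro φ
    have : φ ∈ Submodule.span ℝ b := hb_span ▸ Submodule.mem_top
    induction this using Submodule.span_induction with
    | mem f hf => exact hz f hf
    | zero => simp
    | add f₁ f₂ _ _ h1 h2 => simp [h1, h2]
    | smul c f _ h1 => simp [h1]
  -- Step 3: discreteness
  have hdisc : DiscreteTopology L := by
    rw [discreteTopology_iff_isOpen_singleton]
    rintro ⟨x, hx⟩
    have : ({(⟨x, hx⟩ : L)} : Set L) =
        ⋂ f ∈ b, (fun y : L => f (y : V)) ⁻¹' Metric.ball (f x) 1 := by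
      ext ⟨y, hy⟩
      simp only [Set.mem_singleton_iff, Set.mem_iInter, Set.mem_preimage, Metric.mem_ball]
      constructor
      · rintro h f hf
        have hyx : y = x := by simpa [Subtype.ext_iff] using h
        subst hyx
        simpa using zero_lt_one
      · intro h
        have hz : ∀ f ∈ b, f y = f x := by
          intro f hf
          obtain ⟨k₁, hk₁⟩ := hb_int f hf y hy
          obtain ⟨k₂, hk₂⟩ := hb_int f hf x hx
          have hd := h f hf
          rw [Real.dist_eq, hk₁, hk₂, ← Int.cast_sub, ← Int.cast_abs] at hd
          have hk0 : k₁ - k₂ = 0 := by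
            by_contra hne
            have h1 : (1 : ℤ) ≤ |k₁ - k₂| := Int.one_le_abs hne
            have : (1 : ℝ) ≤ ((|k₁ - k₂| : ℤ) : ℝ) := by exact_mod_cast h1
            linarith
          have hkk : k₁ = k₂ := by omega
          rw [hk₁, hk₂, hkk]
        have : y - x = 0 := hsep (y - x) (fun f hf => by
          rw [map_sub, hz f hf, sub_self])
        exact Subtype.ext (by rw [sub_eq_zero] at this; exact this)
    rw [this]
    refine Set.Finite.isOpen_biInter hb_fin (fun f hf => ?_)
    exact (((f.continuous_of_finiteDimensional).comp continuous_subtype_val)).isOpen_preimage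
      _ Metric.isOpen_ball
  -- Step 4: conclude freeness and rank via ZLattice theory
  haveI := hdisc
  haveI : IsZLattice ℝ L := ⟨hspanL⟩
  haveI := ZLattice.module_finite ℝ L
  haveI := ZLattice.module_free ℝ L
  refine ⟨?_, hdisc, hspanL⟩
  have hrank : Module.finrank ℤ L = m := by
    rw [ZLattice.rank ℝ L, hdim]
  have hcard : Fintype.card (Module.Free.ChooseBasisIndex ℤ L) = m := by
    rw [← Module.finrank_eq_card_chooseBasisIndex, hrank]
  exact ⟨(Module.Free.chooseBasis ℤ L).reindex (Fintype.equivFinOfCardEq hcard)⟩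
end

section
/- Let V be a finite-dimensional real vector space, Γ ≤ GL(V) an irreducible subgroup (the only Γ-invariant linear subspaces are {0} and V), and let α ∈ V* be a nonzero linear functional. If L is an additive subgroup of V that is invariant under Γ (g(L) ⊆ L for all g ∈ Γ) and satisfies α(L) ⊆ ℤ, then L is a discrete subgroup of V (the subspace topology on L is discrete). -/
/-- If `Γ ≤ GL(V)` is irreducible on a finite-dimensional real vector
space `V`, `α ∈ V*` is a nonzero functional, and `L` is a `Γ`-invariant additive
subgroup of `V` with `α (L) ⊆ ℤ`, then `L` is a discrete subgroup of `V`. -/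
theorem stmt_1 {V : Type*} [NormedAddCommGroup V] [NormedSpace ℝ V]
    [FiniteDimensional ℝ V]
    (Γ : Subgroup (V ≃ₗ[ℝ] V))
    (hirr : ∀ W : Submodule ℝ V, (∀ g ∈ Γ, ∀ x ∈ W, g x ∈ W) → W = ⊥ ∨ W = ⊤)
    (α : V →ₗ[ℝ] ℝ) (hα : α ≠ 0)
    (L : AddSubgroup V)
    (hinv : ∀ g ∈ Γ, ∀ x ∈ L, g x ∈ L)
    (hint : ∀ x ∈ L, ∃ k : ℤ, α x = (k : ℝ)) :
    DiscreteTopology L := by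
  -- the topological closure of L
  set C : AddSubgroup V := L.topologicalClosure with hC
  have hCL : (C : Set V) = closure (L : Set V) := rfl
  -- W : all vectors whose whole line lies in C
  set W : Submodule ℝ V :=
    { carrier := {v | ∀ t : ℝ, t • v ∈ C}
      add_mem' := fun {a b} ha hb t => by
        simpa [smul_add] using C.add_mem (ha t) (hb t)
      zero_mem' := fun t => by simpa using C.zero_mem
      smul_mem' := fun c v hv t => by
        simpa [smul_smul] using hv (t * c) } with hW
  have hWmem : ∀ v, v ∈ W ↔ ∀ t : ℝ, t • v ∈ C := fun v => Iff.rfl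
  -- W is Γ-invariant
  have hWinv : ∀ g ∈ Γ, ∀ x ∈ W, g x ∈ W := by
    intro g hg x hx t
    have hgc : Continuous g := (g : V →ₗ[ℝ] V).continuous_of_finiteDimensional
    have himg : (g : V → V) '' (closure (L : Set V)) ⊆ closure (L : Set V) := by
      refine (image_closure_subset_closure_image hgc).trans (closure_mono ?_)
      rintro y ⟨x, hxL, rfl⟩
      exact hinv g hg x hxL
    have : g (t • x) ∈ C := himg ⟨t • x, hx t, rfl⟩
    simpa [map_smul] using this
  -- α takes integer values on C
  have hCint : ∀ v ∈ C, ∃ k : ℤ, α v = (k : ℝ) := by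
    intro v hv
    have hαc : Continuous α := α.continuous_of_finiteDimensional
    have hclosed : IsClosed (α ⁻¹' (Set.range ((↑) : ℤ → ℝ))) := by
      refine IsClosed.preimage hαc ?_
      simpa using Int.isClosedEmbedding_coe_real.isClosed_range
    have hsub : (L : Set V) ⊆ α ⁻¹' (Set.range ((↑) : ℤ → ℝ)) := by
      intro x hx
      obtain ⟨k, hk⟩ := hint x hx
      exact ⟨k, hk.symm⟩
    have := closure_minimal hsub hclosed hv
    obtain ⟨k, hk⟩ := this
    exact ⟨k, hk.symm⟩
  -- α vanishes on W
  have hαW : ∀ v ∈ W, α v = 0 := by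
    intro v hv
    by_contra h0
    obtain ⟨k, hk⟩ := hCint _ (hv ((2 * α v)⁻¹))
    rw [map_smul, smul_eq_mul, inv_mul_eq_div, div_eq_iff (by positivity : (2 : ℝ) * α v ≠ 0)] at hk
    have hcast : ((2 * k - 1 : ℤ) : ℝ) = 0 := by
      push_cast
      have hαv : α v ≠ 0 := h0
      have : (2 * (k : ℝ) - 1) * α v = 0 := by ring_nf; ring_nf at hk; linarith
      have := mul_eq_zero.mp this
      rcases this with h | h
      · linarith
      · exact absurd h hαv
    have : (2 * k - 1 : ℤ) = 0 := by exact_mod_cast hcast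
    omega
  -- W = ⊥
  have hWbot : W = ⊥ := by
    rcases hirr W hWinv with h | h
    · exact h
    · exfalso; apply hα; ext v
      exact hαW v (h ▸ Submodule.mem_top)
  -- separation: a positive lower bound on norms of nonzero elements of L
  have hsep : ∃ ε : ℝ, 0 < ε ∧ ∀ x ∈ L, ‖x‖ < ε → x = 0 := by
    by_contra hcon
    push_neg at hcon
    have hex : ∀ n : ℕ, ∃ x : V, x ∈ L ∧ ‖x‖ < 1 / (n + 1) ∧ x ≠ 0 := by
      intro n
      obtain ⟨x, hxL, hxn, hx0⟩ := hcon (1 / (n + 1)) (by positivity)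
      exact ⟨x, hxL, hxn, hx0⟩
    choose l hlL hln hl0 using hex
    have hlpos : ∀ n, 0 < ‖l n‖ := fun n => norm_pos_iff.mpr (hl0 n)
    -- normalized sequence on the unit sphere
    set u : ℕ → V := fun n => ‖l n‖⁻¹ • l n with hu
    have husphere : ∀ n, u n ∈ Metric.sphere (0 : V) 1 := by
      intro n
      simp [hu, norm_smul, abs_of_pos (inv_pos.mpr (hlpos n)),
        inv_mul_cancel₀ (hlpos n).ne']
    obtain ⟨v, hvmem, φ, hφ, hφtend⟩ :=
      (isCompact_sphere (0 : V) 1).tendsto_subseq husphere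
    have hlz : Filter.Tendsto (fun n => ‖l (φ n)‖) Filter.atTop (nhds 0) := by
      have h1 : Filter.Tendsto (fun n : ℕ => 1 / ((φ n : ℝ) + 1)) Filter.atTop (nhds 0) := by
        apply Filter.Tendsto.comp (tendsto_one_div_add_atTop_nhds_zero_nat)
        exact hφ.tendsto_atTop
      refine squeeze_zero (fun n => (hlpos (φ n)).le) (fun n => (hln (φ n)).le) h1
    -- v lies in W
    have hvW : v ∈ W := by
      intro t
      have hmem : ∀ n, (⌊t / ‖l (φ n)‖⌋ : ℤ) • l (φ n) ∈ L := fun n =>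
        zsmul_mem (hlL (φ n)) _
    -- rewrite the sequence as scalar • u
      have heq : ∀ n, (⌊t / ‖l (φ n)‖⌋ : ℤ) • l (φ n)
          = ((⌊t / ‖l (φ n)‖⌋ : ℝ) * ‖l (φ n)‖) • u (φ n) := by
        intro n
        rw [hu]
        rw [smul_smul, mul_assoc, mul_inv_cancel₀ (hlpos (φ n)).ne', mul_one, ← Int.cast_smul_eq_zsmul ℝ]
      have hc : Filter.Tendsto (fun n => (⌊t / ‖l (φ n)‖⌋ : ℝ) * ‖l (φ n)‖)
          Filter.atTop (nhds t) := by
        have hbound : ∀ n, |(⌊t / ‖l (φ n)‖⌋ : ℝ) * ‖l (φ n)‖ - t| ≤ ‖l (φ n)‖ := by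
          intro n
          have hp := hlpos (φ n)
          have h1 : (⌊t / ‖l (φ n)‖⌋ : ℝ) ≤ t / ‖l (φ n)‖ := Int.floor_le _
          have h2 : t / ‖l (φ n)‖ < ⌊t / ‖l (φ n)‖⌋ + 1 := Int.lt_floor_add_one _
          have h1' : (⌊t / ‖l (φ n)‖⌋ : ℝ) * ‖l (φ n)‖ ≤ t := (le_div_iff₀ hp).mp h1
          have h2' : t < ((⌊t / ‖l (φ n)‖⌋ : ℝ) + 1) * ‖l (φ n)‖ := (div_lt_iff₀ hp).mp h2
          rw [abs_le]
          constructor <;> nlinarith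
        have : Filter.Tendsto (fun n => (⌊t / ‖l (φ n)‖⌋ : ℝ) * ‖l (φ n)‖ - t)
            Filter.atTop (nhds 0) := by
          refine squeeze_zero_norm (fun n => ?_) hlz
          simpa [Real.norm_eq_abs] using hbound n
        have := this.add_const t
        simpa using this
      have htend : Filter.Tendsto (fun n => (⌊t / ‖l (φ n)‖⌋ : ℤ) • l (φ n))
          Filter.atTop (nhds (t • v)) := by
        simp_rw [heq]
        exact hc.smul hφtend
      exact mem_closure_of_tendsto htend (Filter.Eventually.of_forall fun n => hmem n)
    rw [hWbot, Submodule.mem_bot] at hvW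
    rw [hvW] at hvmem
    simp at hvmem
  -- conclude discreteness
  obtain ⟨ε, hε, hsep⟩ := hsep
  refine discreteTopology_iff_isOpen_singleton_zero.mpr ⟨Metric.ball 0 ε, Metric.isOpen_ball, ?_⟩
  ext x
  simp only [Set.mem_preimage, Metric.mem_ball, dist_zero_right, Set.mem_singleton_iff]
  constructor
  · intro hx
    exact Subtype.ext (hsep x x.2 hx)
  · rintro rfl
    simpa using hε
end

section
/- Let m ≥ 2 and let F be a quadratic form on ℚ^m with rational coefficients whose extension F_ℝ to ℝ^m is indefinite, i.e. there exist a, b ∈ ℝ^m with F_ℝ(a) > 0 and F_ℝ(b) < 0. Then there exist a positive rational number d that is not the square of a rational number and vectors a, b ∈ ℚ^m, not both zero, such that the real vector v = a + √d · b is nonzero and F_ℝ(v) = 0. In other words, F acquires a nontrivial isotropic vector over the real quadratic field ℚ(√d) ⊂ ℝ. -/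
open Matrix

section aux

variable {m : ℕ} (A : Matrix (Fin m) (Fin m) ℝ)

private lemma quad_continuous :
    Continuous (fun x : Fin m → ℝ => x ⬝ᵥ A.mulVec x) := by
  have : (fun x : Fin m → ℝ => x ⬝ᵥ A.mulVec x)
      = fun x => ∑ i, x i * ∑ j, A i j * x j := by
    funext x
    simp [dotProduct, Matrix.mulVec]
  rw [this]
  refine continuous_finset_sum _ (fun i _ => ?_)
  exact (continuous_apply i).mul
    (continuous_finset_sum _ (fun j _ => continuous_const.mul (continuous_apply j)))

/-- rational points are dense in `Fin m → ℝ` -/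
private lemma stmt11_exists_rat_vec {U : Set (Fin m → ℝ)} (hU : IsOpen U) (hne : U.Nonempty) :
    ∃ q : Fin m → ℚ, (fun i => (q i : ℝ)) ∈ U := by
  have hdense : Dense (Set.pi Set.univ fun _ : Fin m => Set.range ((↑) : ℚ → ℝ)) :=
    dense_pi Set.univ (fun i _ => Rat.denseRange_cast)
  obtain ⟨x, hx, hxU⟩ := hdense.exists_mem_open hU hne
  choose q hq using fun i => hx i (Set.mem_univ i)
  exact ⟨q, by simpa [funext hq] using hxU⟩

private lemma quad_expand (a b : Fin m → ℝ) (t : ℝ) :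
    (a + t • b) ⬝ᵥ A.mulVec (a + t • b)
      = a ⬝ᵥ A.mulVec a + t * (a ⬝ᵥ A.mulVec b + b ⬝ᵥ A.mulVec a)
        + t ^ 2 * (b ⬝ᵥ A.mulVec b) := by
  simp [Matrix.mulVec_add, Matrix.mulVec_smul, add_dotProduct,
    smul_dotProduct, dotProduct_add, dotProduct_smul,
    smul_eq_mul]
  ring

end aux

/-- An indefinite rational quadratic form `F(x) = xᵀ M x` on `ℚ^m`
(`m ≥ 2`, `M` symmetric) acquires a nontrivial isotropic vector over a real quadratic
field `ℚ(√d)`: there are a positive non-square rational `d` and rational vectors `a, b`,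
not both zero, such that `v = a + √d · b` is a nonzero real vector with `F_ℝ(v) = 0`. -/
theorem stmt_11 (m : ℕ) (hm : 2 ≤ m)
    (M : Matrix (Fin m) (Fin m) ℚ) (hsymm : M.transpose = M)
    (a₀ b₀ : Fin m → ℝ)
    (hpos : 0 < dotProduct a₀ ((M.map ((↑) : ℚ → ℝ)).mulVec a₀))
    (hneg : dotProduct b₀ ((M.map ((↑) : ℚ → ℝ)).mulVec b₀) < 0) :
    ∃ d : ℚ, 0 < d ∧ (¬ ∃ q : ℚ, q ^ 2 = d) ∧
      ∃ a b : Fin m → ℚ, ¬(a = 0 ∧ b = 0) ∧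
        (fun i => (a i : ℝ) + Real.sqrt (d : ℝ) * (b i : ℝ)) ≠ 0 ∧
        dotProduct (fun i => (a i : ℝ) + Real.sqrt (d : ℝ) * (b i : ℝ))
          ((M.map ((↑) : ℚ → ℝ)).mulVec
            (fun i => (a i : ℝ) + Real.sqrt (d : ℝ) * (b i : ℝ))) = 0 := by
  set A : Matrix (Fin m) (Fin m) ℝ := M.map ((↑) : ℚ → ℝ) with hA
  set f : (Fin m → ℝ) → ℝ := fun x => x ⬝ᵥ A.mulVec x with hf
  have hcont : Continuous f := quad_continuous A
  -- get rational vectors a, b with f positive / negative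
  obtain ⟨a, ha⟩ := stmt11_exists_rat_vec (hcont.isOpen_preimage _ isOpen_Ioi)
    ⟨a₀, by simpa [hf] using hpos⟩
  obtain ⟨b, hb⟩ := stmt11_exists_rat_vec (hcont.isOpen_preimage _ isOpen_Iio)
    ⟨b₀, by simpa [hf] using hneg⟩
  simp only [Set.mem_preimage, Set.mem_Ioi, Set.mem_Iio, hf] at ha hb
  set ra : Fin m → ℝ := fun i => (a i : ℝ) with hra
  set rb : Fin m → ℝ := fun i => (b i : ℝ) with hrb
  -- rational quantities
  set α : ℚ := a ⬝ᵥ M.mulVec a with hα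
  set β : ℚ := a ⬝ᵥ M.mulVec b with hβ
  set γ : ℚ := b ⬝ᵥ M.mulVec b with hγ
  have castq : ∀ x y : Fin m → ℚ,
      ((x ⬝ᵥ M.mulVec y : ℚ) : ℝ)
        = (fun i => (x i : ℝ)) ⬝ᵥ A.mulVec (fun i => (y i : ℝ)) := by
    intro x y
    simp only [hA, dotProduct, Matrix.mulVec, Matrix.map_apply]
    push_cast
    rfl
  have hαpos : (0:ℝ) < (α : ℝ) := by rw [hα, castq]; exact ha
  have hγneg : ((γ : ℝ)) < 0 := by rw [hγ, castq]; exact hb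
  have hα0 : 0 < α := by exact_mod_cast hαpos
  have hγ0 : γ < 0 := by exact_mod_cast hγneg
  -- symmetry : b ⬝ᵥ M.mulVec a = β
  have hsym : b ⬝ᵥ M.mulVec a = β := by
    rw [hβ, Matrix.dotProduct_mulVec, Matrix.dotProduct_mulVec, ← Matrix.mulVec_transpose,
      hsymm, ← Matrix.dotProduct_mulVec, dotProduct_comm]
  -- key quadratic fact, for real t
  have key : ∀ t : ℝ, f (ra + t • rb)
      = (α : ℝ) + t * (2 * β) + t ^ 2 * γ := by
    intro t
    simp only [hf]
    rw [quad_expand A]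
    have e1 : ra ⬝ᵥ A.mulVec ra = (α : ℝ) := (castq a a).symm
    have e2 : ra ⬝ᵥ A.mulVec rb = (β : ℝ) := (castq a b).symm
    have e3 : rb ⬝ᵥ A.mulVec ra = (β : ℝ) := by rw [← castq b a, hsym]
    have e4 : rb ⬝ᵥ A.mulVec rb = (γ : ℝ) := (castq b b).symm
    rw [e1, e2, e3, e4]; ring
  -- if v = ra + t • rb is f-null then it is nonzero
  have vne : ∀ t : ℝ, f (ra + t • rb) = 0 → ra + t • rb ≠ 0 := by
    intro t hft h0
    have hra0 : ra = -(t • rb) := by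
      funext i
      have hi := congrFun h0 i
      simp only [Pi.add_apply, Pi.zero_apply, Pi.smul_apply, smul_eq_mul] at hi
      simp only [Pi.neg_apply, Pi.smul_apply, smul_eq_mul]
      linarith
    have : f ra = t ^ 2 * (γ : ℝ) := by
      have := key 0
      simp at this
      simp only [hf, hra0]
      have e4 : rb ⬝ᵥ A.mulVec rb = (γ : ℝ) := (castq b b).symm
      simp [Matrix.mulVec_smul, smul_dotProduct, dotProduct_smul,
        neg_dotProduct, Matrix.mulVec_neg, dotProduct_neg, e4, smul_eq_mul]
      ring
    have hfa : f ra = (α : ℝ) := by simpa using key 0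
    nlinarith [sq_nonneg t]
  -- discriminant
  set D : ℚ := β ^ 2 - α * γ with hD
  have hD0 : 0 < D := by
    have := mul_neg_of_pos_of_neg hα0 hγ0
    nlinarith [sq_nonneg β]
  by_cases hsq : ∃ q : ℚ, q ^ 2 = D
  · -- rational root case: take d = 2, b' = 0
    obtain ⟨q, hq⟩ := hsq
    set t : ℚ := (-β + q) / γ with ht
    have hγq : γ ≠ 0 := ne_of_lt hγ0
    have hroot : (α : ℝ) + (t:ℝ) * (2 * β) + (t:ℝ) ^ 2 * γ = 0 := by
      have : α + t * (2 * β) + t ^ 2 * γ = 0 := by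
        rw [ht, hD] at *
        field_simp
        linear_combination hq
      exact_mod_cast this
    set a' : Fin m → ℚ := a + t • b with ha'
    have hvv : (fun i => ((a' i : ℝ)) + Real.sqrt (((2:ℚ)):ℝ) * (((0:Fin m → ℚ)) i : ℝ))
        = ra + (t:ℝ) • rb := by
      funext i
      simp only [ha', hra, hrb, Pi.add_apply, Pi.smul_apply, smul_eq_mul, Pi.zero_apply]
      push_cast
      ring
    have hnull : f (ra + (t:ℝ) • rb) = 0 := by rw [key]; exact hroot
    have hvne := vne _ hnull
    refine ⟨2, by norm_num, ?_, a', 0, ?_, ?_, ?_⟩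
    · rintro ⟨q, hq2⟩
      have h2 : ((q:ℝ)) ^ 2 = 2 := by exact_mod_cast congrArg (Rat.cast : ℚ → ℝ) hq2
      have h3 : Real.sqrt 2 = |(q:ℝ)| := by
        rw [← Real.sqrt_sq_eq_abs, h2]
      rcases irrational_sqrt_two with h
      rw [h3] at h
      rcases abs_cases (q:ℝ) with ⟨he, -⟩ | ⟨he, -⟩
      · exact h ⟨q, he.symm⟩
      · exact h ⟨-q, by push_cast; linarith⟩
    · rintro ⟨h, -⟩
      apply hvne
      rw [← hvv, h]
      funext i; simp
    · rw [hvv]; exact hvne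
    · show dotProduct _ _ = 0
      rw [hvv]; exact hnull
  · -- irrational root case: d = D
    set s : ℚ := 1 / γ with hs
    set r : ℚ := -β / γ with hr
    set t : ℝ := (r : ℝ) + Real.sqrt (D:ℝ) * (s : ℝ) with ht
    have hsqrt : Real.sqrt (D:ℝ) ^ 2 = (D:ℝ) := by
      rw [Real.sq_sqrt]; positivity
    have hγne : (γ:ℝ) ≠ 0 := ne_of_lt hγneg
    have hDr : Real.sqrt ((D:ℚ):ℝ) ^ 2 = (β:ℝ) ^ 2 - (α:ℝ) * (γ:ℝ) := by
      rw [hsqrt, hD]; push_cast; ring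
    have hroot : (α : ℝ) + t * (2 * β) + t ^ 2 * γ = 0 := by
      rw [ht, hr, hs]
      push_cast
      field_simp
      linear_combination hDr
    set a' : Fin m → ℚ := a + r • b with ha'
    set b' : Fin m → ℚ := s • b with hb'
    have hbne : b ≠ 0 := by
      rintro rfl
      rw [hγ] at hγ0
      simp [zero_dotProduct] at hγ0
    have hb'ne : b' ≠ 0 := by
      rw [hb']
      intro h
      apply hbne
      funext i
      have := congrFun h i
      simp [Pi.smul_apply, smul_eq_mul, hs] at this
      rcases this with h1 | h1
      · exact absurd h1 (by exact_mod_cast hγne)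
      · simp [h1]
    have hvv : (fun i => ((a' i : ℝ)) + Real.sqrt ((D:ℚ):ℝ) * ((b' i) : ℝ))
        = ra + t • rb := by
      funext i
      simp [ha', hb', hra, hrb, Pi.add_apply, Pi.smul_apply, smul_eq_mul, ht]
      push_cast
      ring
    have hnull : f (ra + t • rb) = 0 := by rw [key]; exact hroot
    refine ⟨D, hD0, hsq, a', b', ?_, ?_, ?_⟩
    · rintro ⟨-, h⟩; exact hb'ne h
    · rw [hvv]; exact vne _ hnull
    · show dotProduct _ _ = 0
      rw [hvv]; exact hnull
end
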